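/- In a real 4-dimensional inner-product space with symmetric bilinear form B of signature (+,-,-,-), suppose a linear map K is B-symmetric (B(Kx,y) = B(x,Ky) for all x,y). Then K cannot have two distinct pairs of non-real complex-conjugate eigenvalues; equivalently, K has at least two real eigenvalues (counted with multiplicity). -/

import Mathlib

open Polynomial Matrix


lemma vec4_eq {y z : Fin 4 → ℝ} (h0 : y 0 = z 0) (h1 : y 1 = z 1)
    (h2 : y 2 = z 2) (h3 : y 3 = z 3) : y = z := by
  funext i
  match i with
  | 0 => exact h0
  | 1 => exact h1
  | 2 => exact h2
  | 3 => exact h3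

lemma sumsq_zero {a b c : ℝ} (h : a * a + b * b + c * c = 0) :
    a = 0 ∧ b = 0 ∧ c = 0 := by
  refine ⟨?_, ?_, ?_⟩ <;>
  · apply mul_self_eq_zero.mp
    apply le_antisymm ?_ (mul_self_nonneg _)
    nlinarith [mul_self_nonneg a, mul_self_nonneg b, mul_self_nonneg c]

lemma eta_form (y y' : Fin 4 → ℝ) :
    y ⬝ᵥ (Matrix.diagonal ![1, -1, -1, -1] : Matrix (Fin 4) (Fin 4) ℝ).mulVec y' =
      y 0 * y' 0 - y 1 * y' 1 - y 2 * y' 2 - y 3 * y' 3 := by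
  simp [Matrix.mulVec, dotProduct, Fin.sum_univ_four, Matrix.diagonal]
  ring

lemma isotropic_pair {y y' : Fin 4 → ℝ}
    (h1 : y 0 * y 0 = y 1 * y 1 + y 2 * y 2 + y 3 * y 3)
    (h2 : y' 0 * y' 0 = y' 1 * y' 1 + y' 2 * y' 2 + y' 3 * y' 3)
    (h3 : y 0 * y' 0 = y 1 * y' 1 + y 2 * y' 2 + y 3 * y' 3) :
    (y 0 • y' = y' 0 • y) ∧ (y 0 = 0 → y = 0) := by
  have hsum : (y 0 * y' 1 - y' 0 * y 1) * (y 0 * y' 1 - y' 0 * y 1)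
      + (y 0 * y' 2 - y' 0 * y 2) * (y 0 * y' 2 - y' 0 * y 2)
      + (y 0 * y' 3 - y' 0 * y 3) * (y 0 * y' 3 - y' 0 * y 3) = 0 := by
    linear_combination (-(y' 0 * y' 0)) * h1 - (y 0 * y 0) * h2 + (2 * (y 0 * y' 0)) * h3
  obtain ⟨e1, e2, e3⟩ := sumsq_zero hsum
  constructor
  · apply vec4_eq <;> simp only [Pi.smul_apply, smul_eq_mul] <;> linarith
  · intro h0
    have hz : y 1 * y 1 + y 2 * y 2 + y 3 * y 3 = 0 := by rw [h0] at h1; linarith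
    obtain ⟨z1, z2, z3⟩ := sumsq_zero hz
    apply vec4_eq <;> simp [h0, z1, z2, z3]

lemma neg_on_perp {f y : Fin 4 → ℝ}
    (hf : f 1 * f 1 + f 2 * f 2 + f 3 * f 3 < f 0 * f 0)
    (ho : f 0 * y 0 = f 1 * y 1 + f 2 * y 2 + f 3 * y 3) :
    y 0 * y 0 ≤ y 1 * y 1 + y 2 * y 2 + y 3 * y 3 ∧
      (y 0 * y 0 = y 1 * y 1 + y 2 * y 2 + y 3 * y 3 → y = 0) := by
  set F := f 1 * f 1 + f 2 * f 2 + f 3 * f 3 with hFdef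
  set S := y 1 * y 1 + y 2 * y 2 + y 3 * y 3 with hSdef
  have hC : (f 1 * y 1 + f 2 * y 2 + f 3 * y 3)^2 ≤ F * S := by
    rw [hFdef, hSdef]
    nlinarith [sq_nonneg (f 1 * y 2 - f 2 * y 1), sq_nonneg (f 1 * y 3 - f 3 * y 1),
      sq_nonneg (f 2 * y 3 - f 3 * y 2)]
  have hS : 0 ≤ S := by
    rw [hSdef]; nlinarith [mul_self_nonneg (y 1), mul_self_nonneg (y 2), mul_self_nonneg (y 3)]
  have hF : 0 ≤ F := by
    rw [hFdef]; nlinarith [mul_self_nonneg (f 1), mul_self_nonneg (f 2), mul_self_nonneg (f 3)]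
  have hf0 : 0 < f 0 * f 0 := lt_of_le_of_lt hF hf
  have key : (f 0 * f 0) * (y 0 * y 0) ≤ F * S := by
    calc (f 0 * f 0) * (y 0 * y 0) = (f 0 * y 0)^2 := by ring
      _ = (f 1 * y 1 + f 2 * y 2 + f 3 * y 3)^2 := by rw [ho]
      _ ≤ F * S := hC
  have hmono : F * S ≤ (f 0 * f 0) * S := mul_le_mul_of_nonneg_right hf.le hS
  have hle : y 0 * y 0 ≤ S := by
    have h7 : (f 0 * f 0) * (y 0 * y 0) ≤ (f 0 * f 0) * S := le_trans key hmono
    exact (mul_le_mul_iff_right₀ hf0).mp h7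
  refine ⟨hle, fun heq => ?_⟩
  have hS0 : S = 0 := by
    rcases hS.lt_or_eq with hpos | hzero
    · exfalso
      have h8 : F * S < (f 0 * f 0) * S := mul_lt_mul_of_pos_right hf hpos
      have h9 : (f 0 * f 0) * S ≤ F * S := by
        calc (f 0 * f 0) * S = (f 0 * f 0) * (y 0 * y 0) := by rw [heq]
          _ ≤ F * S := key
      linarith
    · exact hzero.symm
  obtain ⟨z1, z2, z3⟩ := sumsq_zero (hSdef ▸ hS0)
  have hy0 : y 0 = 0 := mul_self_eq_zero.mp (by rw [heq, hS0])
  apply vec4_eq <;> simp [hy0, z1, z2, z3]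

lemma charpoly_similar {T M N : Matrix (Fin 4) (Fin 4) ℝ} (hT : IsUnit T.det)
    (h : M * T = T * N) : M.charpoly = N.charpoly := by
  have hTc : ((C : ℝ →+* ℝ[X]).mapMatrix T).det = C T.det :=
    ((C : ℝ →+* ℝ[X]).map_det T).symm
  have hdet : (C : ℝ →+* ℝ[X]) T.det ≠ 0 := by
    simpa using hT.ne_zero
  have hcomm : charmatrix M * (C : ℝ →+* ℝ[X]).mapMatrix T
      = (C : ℝ →+* ℝ[X]).mapMatrix T * charmatrix N := by
    unfold charmatrix
    rw [sub_mul, mul_sub]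
    congr 1
    · exact (Matrix.scalar_commute (X : ℝ[X]) (fun p => (Commute.all _ _)) _).symm.eq.symm
    · rw [← RingHom.map_mul, ← RingHom.map_mul, h]
  have hd := congrArg Matrix.det hcomm
  rw [Matrix.det_mul, Matrix.det_mul, hTc] at hd
  unfold Matrix.charpoly
  rw [mul_comm] at hd
  exact mul_left_cancel₀ hdet hd

lemma eval_charpoly_det (A : Matrix (Fin 4) (Fin 4) ℂ) (z : ℂ) :
    A.charpoly.eval z = (z • (1 : Matrix (Fin 4) (Fin 4) ℂ) - A).det := by
  have h1 : A.charpoly.eval z = (evalRingHom z) A.charmatrix.det := rfl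
  rw [h1, RingHom.map_det]
  congr 1
  ext i j
  by_cases hij : i = j
  · subst hij
    simp [charmatrix_apply_eq, Matrix.one_apply]
  · simp [charmatrix_apply_ne _ _ _ hij, Matrix.one_apply, hij]

lemma exists_eigenvector (A : Matrix (Fin 4) (Fin 4) ℂ) (z : ℂ)
    (h : A.charpoly.IsRoot z) : ∃ u : Fin 4 → ℂ, u ≠ 0 ∧ A.mulVec u = z • u := by
  have hdet : (z • (1 : Matrix (Fin 4) (Fin 4) ℂ) - A).det = 0 := by
    rw [← eval_charpoly_det]; exact h
  obtain ⟨u, hu0, hu⟩ := (Matrix.exists_mulVec_eq_zero_iff).mpr hdet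
  refine ⟨u, hu0, ?_⟩
  rw [Matrix.sub_mulVec, Matrix.smul_mulVec, Matrix.one_mulVec, sub_eq_zero] at hu
  exact hu.symm

lemma charpoly_fin2 (A : Matrix (Fin 2) (Fin 2) ℝ) :
    A.charpoly = X^2 - C (A 0 0 + A 1 1) * X + C (A 0 0 * A 1 1 - A 0 1 * A 1 0) := by
  unfold Matrix.charpoly
  rw [Matrix.det_fin_two]
  simp [charmatrix_apply, Matrix.diagonal_apply, _root_.map_add, _root_.map_mul, _root_.map_sub]
  ring

noncomputable def blockN (a b p q r s : ℝ) : Matrix (Fin 4) (Fin 4) ℝ :=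
  Matrix.reindex finSumFinEquiv finSumFinEquiv
    (Matrix.fromBlocks !![a, b; -b, a] 0 0 !![p, r; q, s])

lemma blockN_charpoly (a b p q r s : ℝ) :
    (blockN a b p q r s).charpoly
      = ((X - C a)^2 + C b^2) * (X^2 - C (p + s) * X + C (p * s - q * r)) := by
  unfold blockN
  rw [Matrix.charpoly_reindex, Matrix.charpoly_fromBlocks_zero₂₁, charpoly_fin2, charpoly_fin2]
  simp [_root_.map_add, _root_.map_mul, _root_.map_sub, _root_.map_neg]
  ring

lemma blockN_eq (a b p q r s : ℝ) :
    blockN a b p q r s = !![a, b, 0, 0; -b, a, 0, 0; 0, 0, p, r; 0, 0, q, s] := by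
  unfold blockN
  ext i j
  fin_cases i <;> fin_cases j <;>
    simp [Matrix.fromBlocks, finSumFinEquiv, Fin.addCases, Matrix.reindex_apply] <;> rfl

lemma eigen_real_parts {M : Matrix (Fin 4) (Fin 4) ℝ} {u : Fin 4 → ℂ} {z : ℂ}
    (h : (M.map (fun r : ℝ => (r : ℂ))).mulVec u = z • u) :
    M.mulVec (fun i => (u i).re) = z.re • (fun i => (u i).re) - z.im • (fun i => (u i).im)
    ∧ M.mulVec (fun i => (u i).im) = z.im • (fun i => (u i).re) + z.re • (fun i => (u i).im) := by
  constructor <;> funext i <;> have h' := congrFun h i <;>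
    simp only [Matrix.mulVec, dotProduct, Fin.sum_univ_four, Matrix.map_apply,
      Pi.smul_apply, Pi.sub_apply, Pi.add_apply, smul_eq_mul, Complex.ext_iff, Complex.add_re,
      Complex.add_im, Complex.mul_re, Complex.mul_im, Complex.ofReal_re, Complex.ofReal_im] at h' ⊢
  · linarith [h'.1]
  · linarith [h'.2]

lemma eigen_indep {M : Matrix (Fin 4) (Fin 4) ℝ} {u : Fin 4 → ℂ} {z : ℂ}
    (h : (M.map (fun r : ℝ => (r : ℂ))).mulVec u = z • u) (hu0 : u ≠ 0) (hzim : z.im ≠ 0) :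
    ∀ c c' : ℝ, c • (fun i => (u i).re) + c' • (fun i => (u i).im) = 0 → c = 0 ∧ c' = 0 := by
  intro c c' hcc
  by_contra hcon
  set w : ℂ := (c' : ℂ) + (c : ℂ) * Complex.I with hw
  have hwne : w ≠ 0 := by
    intro h0
    rw [hw, Complex.ext_iff] at h0
    simp only [Complex.add_re, Complex.add_im, Complex.mul_re, Complex.mul_im,
      Complex.ofReal_re, Complex.ofReal_im, Complex.I_re, Complex.I_im, Complex.zero_re,
      Complex.zero_im] at h0
    apply hcon
    constructor <;> [skip; skip] <;> linarith [h0.1, h0.2]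
  have hv0 : w • u ≠ 0 := smul_ne_zero hwne hu0
  obtain ⟨i, hi⟩ := Function.ne_iff.mp hv0
  have him : ∀ j, ((w • u) j).im = 0 := by
    intro j
    have h2 := congrFun hcc j
    simp only [Pi.add_apply, Pi.smul_apply, Pi.zero_apply, smul_eq_mul] at h2
    simp only [Pi.smul_apply, smul_eq_mul, Complex.mul_im, hw, Complex.add_re, Complex.add_im,
      Complex.mul_re, Complex.mul_im, Complex.ofReal_re, Complex.ofReal_im, Complex.I_re,
      Complex.I_im]
    linarith [h2]
  have heig : (M.map (fun r : ℝ => (r : ℂ))).mulVec (w • u) = z • (w • u) := by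
    rw [Matrix.mulVec_smul, h, smul_comm]
  have h3 := congrFun heig i
  have hLim : (((M.map (fun r : ℝ => (r : ℂ))).mulVec (w • u)) i).im = 0 := by
    simp only [Matrix.mulVec, dotProduct, Fin.sum_univ_four, Matrix.map_apply,
      Complex.add_im, Complex.mul_im, Complex.ofReal_re, Complex.ofReal_im, him]
    ring
  rw [h3] at hLim
  simp only [Pi.smul_apply, smul_eq_mul] at hLim
  rw [Complex.mul_im] at hLim
  have him' : (w * u i).im = 0 := by
    have := him i
    simpa only [Pi.smul_apply, smul_eq_mul] using this
  rw [him'] at hLim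
  have hre : (w * u i).re = 0 := by
    rcases mul_eq_zero.mp (by linarith [hLim] : z.im * (w * u i).re = 0) with h4 | h4
    · exact absurd h4 hzim
    · exact h4
  apply hi
  show w • u i = (0 : Fin 4 → ℂ) i
  simp only [smul_eq_mul, Pi.zero_apply]
  rw [Complex.ext_iff]
  simpa using ⟨hre, him'⟩

lemma eigen_orth {G M : Matrix (Fin 4) (Fin 4) ℝ}
    (hMG : Mᵀ * G = G * M) {u : Fin 4 → ℂ} {z : ℂ}
    (hu : (M.map (fun r : ℝ => (r : ℂ))).mulVec u = z • u) (hzim : z.im ≠ 0) :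
    (fun i => (u i).re) ⬝ᵥ G.mulVec (fun i => (u i).re)
      + (fun i => (u i).im) ⬝ᵥ G.mulVec (fun i => (u i).im) = 0 := by
  set Mc := M.map (fun r : ℝ => (r : ℂ)) with hMc
  set Gc := G.map (fun r : ℝ => (r : ℂ)) with hGc
  have hMGc : Mcᵀ * Gc = Gc * Mc := by
    rw [hMc, hGc, ← Matrix.transpose_map]
    have h1 : (Mᵀ).map (fun r : ℝ => (r : ℂ)) * G.map (fun r : ℝ => (r : ℂ))
        = (Mᵀ * G).map (fun r : ℝ => (r : ℂ)) := by
      ext i j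
      simp only [Matrix.mul_apply, Matrix.map_apply, Fin.sum_univ_four]
      push_cast
      ring
    have h2 : G.map (fun r : ℝ => (r : ℂ)) * M.map (fun r : ℝ => (r : ℂ))
        = (G * M).map (fun r : ℝ => (r : ℂ)) := by
      ext i j
      simp only [Matrix.mul_apply, Matrix.map_apply, Fin.sum_univ_four]
      push_cast
      ring
    rw [h1, h2, hMG]
  have hsaC : ∀ x y : Fin 4 → ℂ, (Mc.mulVec x) ⬝ᵥ Gc.mulVec y = x ⬝ᵥ Gc.mulVec (Mc.mulVec y) := by
    intro x y
    calc (Mc.mulVec x) ⬝ᵥ Gc.mulVec y = (x ᵥ* Mcᵀ) ⬝ᵥ Gc.mulVec y := by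
          rw [Matrix.vecMul_transpose]
      _ = x ⬝ᵥ (Mcᵀ *ᵥ (Gc *ᵥ y)) := (Matrix.dotProduct_mulVec _ _ _).symm
      _ = x ⬝ᵥ ((Mcᵀ * Gc) *ᵥ y) := by rw [Matrix.mulVec_mulVec]
      _ = x ⬝ᵥ ((Gc * Mc) *ᵥ y) := by rw [hMGc]
      _ = x ⬝ᵥ Gc.mulVec (Mc.mulVec y) := by rw [← Matrix.mulVec_mulVec]
  have hustar : Mc.mulVec (star u) = (star z) • (star u) := by
    funext i
    have h' := congrFun hu i
    simp only [Matrix.mulVec, dotProduct, Fin.sum_univ_four, hMc, Matrix.map_apply,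
      Pi.smul_apply, smul_eq_mul] at h' ⊢
    have := congrArg (starRingEnd ℂ) h'
    simpa only [_root_.map_add, _root_.map_mul, Complex.conj_ofReal, Pi.star_apply,
      Complex.star_def] using this
  have horth : u ⬝ᵥ Gc.mulVec (star u) = 0 := by
    have h1 := hsaC u (star u)
    rw [hu, hustar] at h1
    rw [smul_dotProduct, Matrix.mulVec_smul, dotProduct_smul] at h1
    have h2 : (z - star z) * (u ⬝ᵥ Gc.mulVec (star u)) = 0 := by
      rw [sub_mul]
      simp only [smul_eq_mul] at h1
      rw [h1]
      ring
    rcases mul_eq_zero.mp h2 with h3 | h3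
    · exfalso
      apply hzim
      have := congrArg Complex.im h3
      simp only [Complex.sub_im, Complex.conj_im, Complex.zero_im] at this
      · simpa using this
    · exact h3
  have hre := congrArg Complex.re horth
  simp only [Matrix.mulVec, dotProduct, Fin.sum_univ_four, hGc, Matrix.map_apply,
    Pi.star_apply, Complex.add_re, Complex.add_im, Complex.mul_re, Complex.mul_im,
    Complex.ofReal_re, Complex.ofReal_im, Complex.star_def, Complex.conj_re, Complex.conj_im,
    Complex.zero_re] at hre ⊢
  ring_nf at hre ⊢
  linarith [hre]

lemma two_real_roots_of_no_complex (p : ℝ[X]) (hm : p.Monic) (hdeg : p.natDegree = 4)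
    (hnoc : ∀ z : ℂ, (p.map (algebraMap ℝ ℂ)).IsRoot z → z.im = 0) :
    ∃ r s : ℝ, (X - C r) * (X - C s) ∣ p := by
  have hp0 : p ≠ 0 := hm.ne_zero
  have hinj : Function.Injective (algebraMap ℝ ℂ) := (algebraMap ℝ ℂ).injective
  -- a root of the complexification
  have hdegC : (p.map (algebraMap ℝ ℂ)).natDegree = 4 := by
    rw [Polynomial.natDegree_map_eq_of_injective hinj, hdeg]
  have hC0 : p.map (algebraMap ℝ ℂ) ≠ 0 := by
    intro h
    rw [h] at hdegC
    simp at hdegC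
  obtain ⟨z, hz⟩ := Complex.exists_root (f := p.map (algebraMap ℝ ℂ)) (by
    rw [Polynomial.degree_eq_natDegree hC0, hdegC]
    norm_num)
  have hzim := hnoc z hz
  have hzr : z = ((z.re : ℝ) : ℂ) := by
    rw [Complex.ext_iff]
    simp [hzim]
  have hr : p.IsRoot z.re := by
    have : (p.map (algebraMap ℝ ℂ)).eval ((algebraMap ℝ ℂ) z.re) = 0 := by
      rw [Complex.coe_algebraMap, ← hzr]; exact hz
    rw [Polynomial.eval_map, Polynomial.eval₂_at_apply] at this
    exact hinj (by simpa using this)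
  obtain ⟨q, hq⟩ := (Polynomial.dvd_iff_isRoot.mpr hr)
  have hq0 : q ≠ 0 := by
    intro h
    rw [h, mul_zero] at hq
    exact hp0 hq
  have hqdeg : q.natDegree = 3 := by
    have h1 : p.natDegree = (X - C z.re).natDegree + q.natDegree :=
      hq ▸ Polynomial.natDegree_mul (Polynomial.X_sub_C_ne_zero _) hq0
    rw [Polynomial.natDegree_X_sub_C] at h1
    omega
  have hqC0 : q.map (algebraMap ℝ ℂ) ≠ 0 := by
    intro h
    have := Polynomial.map_eq_zero_iff hinj |>.mp h
    exact hq0 this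
  obtain ⟨w, hw⟩ := Complex.exists_root (f := q.map (algebraMap ℝ ℂ)) (by
    rw [Polynomial.degree_eq_natDegree hqC0, Polynomial.natDegree_map_eq_of_injective hinj, hqdeg]
    norm_num)
  have hwp : (p.map (algebraMap ℝ ℂ)).IsRoot w := by
    rw [hq, Polynomial.map_mul]
    unfold Polynomial.IsRoot
    rw [Polynomial.eval_mul, hw, mul_zero]
  have hwim := hnoc w hwp
  have hwr : w = ((w.re : ℝ) : ℂ) := by
    rw [Complex.ext_iff]
    simp [hwim]
  have hs : q.IsRoot w.re := by
    have : (q.map (algebraMap ℝ ℂ)).eval ((algebraMap ℝ ℂ) w.re) = 0 := by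
      rw [Complex.coe_algebraMap, ← hwr]; exact hw
    rw [Polynomial.eval_map, Polynomial.eval₂_at_apply] at this
    exact hinj (by simpa using this)
  obtain ⟨q', hq'⟩ := (Polynomial.dvd_iff_isRoot.mpr hs)
  exact ⟨z.re, w.re, q', by rw [hq, hq']; ring⟩

lemma transfer_form (Q P : Matrix (Fin 4) (Fin 4) ℝ) (y y' : Fin 4 → ℝ) :
    (P *ᵥ y) ⬝ᵥ Q *ᵥ (P *ᵥ y') = y ⬝ᵥ ((Pᵀ * Q * P) *ᵥ y') := by
  calc (P *ᵥ y) ⬝ᵥ Q *ᵥ (P *ᵥ y')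
      = (y ᵥ* Pᵀ) ⬝ᵥ Q *ᵥ (P *ᵥ y') := by rw [Matrix.vecMul_transpose]
    _ = y ⬝ᵥ (Pᵀ *ᵥ (Q *ᵥ (P *ᵥ y'))) := (Matrix.dotProduct_mulVec _ _ _).symm
    _ = y ⬝ᵥ ((Pᵀ * Q * P) *ᵥ y') := by rw [Matrix.mulVec_mulVec, Matrix.mulVec_mulVec]

set_option maxHeartbeats 1000000 in
theorem stmt5 (G M : Matrix (Fin 4) (Fin 4) ℝ)
    (hGsymm : Gᵀ = G)
    (hsig : ∃ P : Matrix (Fin 4) (Fin 4) ℝ, IsUnit P.det ∧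
      Pᵀ * G * P = Matrix.diagonal ![1, -1, -1, -1])
    (hsa : ∀ x y : Fin 4 → ℝ,
      (M.mulVec x) ⬝ᵥ (G.mulVec y) = x ⬝ᵥ (G.mulVec (M.mulVec y))) :
    (¬ ∃ z w : ℂ, z.im ≠ 0 ∧ w.im ≠ 0 ∧ w ≠ z ∧ w ≠ star z ∧
        ((M.map (fun r : ℝ => (r : ℂ))).charpoly).IsRoot z ∧
        ((M.map (fun r : ℝ => (r : ℂ))).charpoly).IsRoot w) ∧
      ∃ r s : ℝ, (X - C r) * (X - C s) ∣ M.charpoly := by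
  have hchar : (M.map (fun r : ℝ => (r : ℂ))).charpoly = M.charpoly.map (algebraMap ℝ ℂ) := by
    have h0 : M.map (fun r : ℝ => (r : ℂ)) = M.map ⇑(algebraMap ℝ ℂ) := by
      rw [Complex.coe_algebraMap]
    rw [h0, Matrix.charpoly_map]
  by_cases hcomplex : ∃ z : ℂ, z.im ≠ 0 ∧ ((M.map (fun r : ℝ => (r : ℂ))).charpoly).IsRoot z
  case neg =>
    constructor
    · rintro ⟨z, w, hzim, -, -, -, hz, -⟩
      exact hcomplex ⟨z, hzim, hz⟩
    · refine two_real_roots_of_no_complex M.charpoly (Matrix.charpoly_monic M) ?_ ?_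
      · rw [Matrix.charpoly_natDegree_eq_dim]
        simp
      · intro z hz
        by_contra him
        exact hcomplex ⟨z, him, by rw [hchar]; exact hz⟩
  case pos =>
  obtain ⟨z, hzim, hzroot⟩ := hcomplex
  obtain ⟨P, hPu, hPG⟩ := hsig
  obtain ⟨u, hu0, huv⟩ := exists_eigenvector _ z hzroot
  obtain ⟨hMa, hMb⟩ := eigen_real_parts huv
  have hindep := eigen_indep huv hu0 hzim
  -- matrix form of self-adjointness
  have hMG : Mᵀ * G = G * M := by
    have key : ∀ x y : Fin 4 → ℝ, x ⬝ᵥ ((Mᵀ * G) *ᵥ y) = x ⬝ᵥ ((G * M) *ᵥ y) := by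
      intro x y
      calc x ⬝ᵥ ((Mᵀ * G) *ᵥ y) = x ⬝ᵥ (Mᵀ *ᵥ (G *ᵥ y)) := by rw [Matrix.mulVec_mulVec]
        _ = (x ᵥ* Mᵀ) ⬝ᵥ (G *ᵥ y) := Matrix.dotProduct_mulVec _ _ _
        _ = (M *ᵥ x) ⬝ᵥ (G *ᵥ y) := by rw [Matrix.vecMul_transpose]
        _ = x ⬝ᵥ (G *ᵥ (M *ᵥ y)) := hsa x y
        _ = x ⬝ᵥ ((G * M) *ᵥ y) := by rw [Matrix.mulVec_mulVec]
    ext i j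
    have h := key (Pi.single i 1) (Pi.single j 1)
    simp only [Matrix.mulVec_single_one, mul_one, single_dotProduct, one_mul, Matrix.col_apply] at h
    exact h
  have haabb := eigen_orth hMG huv hzim
  set a : Fin 4 → ℝ := fun i => (u i).re with hadef
  set b : Fin 4 → ℝ := fun i => (u i).im with hbdef
  set α : ℝ := z.re with halpha
  set β : ℝ := z.im with hbeta
  have hBsymm : ∀ x y : Fin 4 → ℝ, x ⬝ᵥ G.mulVec y = y ⬝ᵥ G.mulVec x := by
    intro x y
    calc x ⬝ᵥ G *ᵥ y = (x ᵥ* G) ⬝ᵥ y := Matrix.dotProduct_mulVec _ _ _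
      _ = (x ᵥ* Gᵀᵀ) ⬝ᵥ y := by rw [Matrix.transpose_transpose]
      _ = (Gᵀ *ᵥ x) ⬝ᵥ y := by rw [Matrix.vecMul_transpose]
      _ = (G *ᵥ x) ⬝ᵥ y := by rw [hGsymm]
      _ = y ⬝ᵥ (G *ᵥ x) := dotProduct_comm _ _
  set t : ℝ := a ⬝ᵥ G *ᵥ a with ht
  set s0 : ℝ := a ⬝ᵥ G *ᵥ b with hs0def
  have hbb : b ⬝ᵥ G *ᵥ b = -t := by linarith [haabb]
  have hba : b ⬝ᵥ G *ᵥ a = s0 := by rw [hBsymm b a]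
  -- transfer to eta coordinates
  have hPPi : P * P⁻¹ = 1 := Matrix.mul_nonsing_inv P hPu
  have hrec : ∀ x : Fin 4 → ℝ, P *ᵥ (P⁻¹ *ᵥ x) = x := by
    intro x
    rw [Matrix.mulVec_mulVec, hPPi, Matrix.one_mulVec]
  have htr : ∀ x y : Fin 4 → ℝ, x ⬝ᵥ G *ᵥ y =
      (P⁻¹ *ᵥ x) 0 * (P⁻¹ *ᵥ y) 0 - (P⁻¹ *ᵥ x) 1 * (P⁻¹ *ᵥ y) 1
      - (P⁻¹ *ᵥ x) 2 * (P⁻¹ *ᵥ y) 2 - (P⁻¹ *ᵥ x) 3 * (P⁻¹ *ᵥ y) 3 := by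
    intro x y
    have h := transfer_form G P (P⁻¹ *ᵥ x) (P⁻¹ *ᵥ y)
    rw [hrec x, hrec y, hPG, eta_form] at h
    exact h
  -- the plane spanned by a, b is nondegenerate
  have hW : ¬(t = 0 ∧ s0 = 0) := by
    rintro ⟨ht0, hs00⟩
    have h1 : (P⁻¹ *ᵥ a) 0 * (P⁻¹ *ᵥ a) 0 = (P⁻¹ *ᵥ a) 1 * (P⁻¹ *ᵥ a) 1
        + (P⁻¹ *ᵥ a) 2 * (P⁻¹ *ᵥ a) 2 + (P⁻¹ *ᵥ a) 3 * (P⁻¹ *ᵥ a) 3 := by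
      have h := htr a a
      rw [← ht, ht0] at h
      linarith
    have h2 : (P⁻¹ *ᵥ b) 0 * (P⁻¹ *ᵥ b) 0 = (P⁻¹ *ᵥ b) 1 * (P⁻¹ *ᵥ b) 1
        + (P⁻¹ *ᵥ b) 2 * (P⁻¹ *ᵥ b) 2 + (P⁻¹ *ᵥ b) 3 * (P⁻¹ *ᵥ b) 3 := by
      have h := htr b b
      rw [hbb, ht0] at h
      simp only [neg_zero] at h
      linarith
    have h3 : (P⁻¹ *ᵥ a) 0 * (P⁻¹ *ᵥ b) 0 = (P⁻¹ *ᵥ a) 1 * (P⁻¹ *ᵥ b) 1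
        + (P⁻¹ *ᵥ a) 2 * (P⁻¹ *ᵥ b) 2 + (P⁻¹ *ᵥ a) 3 * (P⁻¹ *ᵥ b) 3 := by
      have h := htr a b
      rw [← hs0def, hs00] at h
      linarith
    obtain ⟨hdep, hzero⟩ := isotropic_pair h1 h2 h3
    have himg := congrArg (fun v => P *ᵥ v) hdep
    simp only [Matrix.mulVec_smul, hrec] at himg
    -- himg : (P⁻¹ *ᵥ a) 0 • b = (P⁻¹ *ᵥ b) 0 • a
    have hco := hindep ((P⁻¹ *ᵥ b) 0) (-((P⁻¹ *ᵥ a) 0)) (by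
      rw [neg_smul, ← sub_eq_add_neg, ← himg, sub_self])
    have hya0 : (P⁻¹ *ᵥ a) 0 = 0 := by
      have := hco.2
      linarith [neg_eq_zero.mp this]
    have haz : a = 0 := by
      have hz0 := hzero hya0
      have h2 := hrec a
      rw [hz0, Matrix.mulVec_zero] at h2
      exact h2.symm
    have := hindep 1 0 (by rw [haz]; simp)
    exact one_ne_zero this.1
  have hts : t * t + s0 * s0 ≠ 0 := by
    intro h
    obtain ⟨h1, h2, -⟩ := sumsq_zero (by linarith : t * t + s0 * s0 + (0:ℝ) * 0 = 0)
    exact hW ⟨h1, h2⟩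
  -- bilinearity helpers
  have hBcomb : ∀ (x w1 w2 : Fin 4 → ℝ) (l m : ℝ),
      x ⬝ᵥ G *ᵥ (l • w1 + m • w2) = l * (x ⬝ᵥ G *ᵥ w1) + m * (x ⬝ᵥ G *ᵥ w2) := by
    intro x w1 w2 l m
    rw [Matrix.mulVec_add, Matrix.mulVec_smul, Matrix.mulVec_smul, dotProduct_add,
      dotProduct_smul, dotProduct_smul, smul_eq_mul, smul_eq_mul]
  have hexp : ∀ (x y w1 w2 : Fin 4 → ℝ) (l m l' m' : ℝ),
      (l • x + m • y) ⬝ᵥ G *ᵥ (l' • w1 + m' • w2)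
        = l * l' * (x ⬝ᵥ G *ᵥ w1) + l * m' * (x ⬝ᵥ G *ᵥ w2)
          + m * l' * (y ⬝ᵥ G *ᵥ w1) + m * m' * (y ⬝ᵥ G *ᵥ w2) := by
    intro x y w1 w2 l m l' m'
    rw [add_dotProduct, smul_dotProduct, smul_dotProduct,
      hBcomb, hBcomb, smul_eq_mul, smul_eq_mul]
    ring
  -- the kernel of the pairing with a and b
  let φ : (Fin 4 → ℝ) →ₗ[ℝ] ℝ × ℝ :=
  { toFun := fun x => (a ⬝ᵥ G *ᵥ x, b ⬝ᵥ G *ᵥ x)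
    map_add' := by
      intro x y
      simp [Matrix.mulVec_add, dotProduct_add, Prod.ext_iff]
    map_smul' := by
      intro m x
      simp [Matrix.mulVec_smul, dotProduct_smul, Prod.ext_iff, smul_eq_mul] }
  have hφapp : ∀ x : Fin 4 → ℝ, φ x = (a ⬝ᵥ G *ᵥ x, b ⬝ᵥ G *ᵥ x) := fun x => rfl
  have hsurj : Function.Surjective φ := by
    rintro ⟨p0, q0⟩
    refine ⟨((p0 * t + q0 * s0)/(t*t + s0*s0)) • a + ((p0 * s0 - q0 * t)/(t*t + s0*s0)) • b, ?_⟩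
    rw [hφapp, hBcomb, hBcomb, ← ht, ← hs0def, hba, hbb]
    have hA : (p0 * t + q0 * s0)/(t*t + s0*s0) * t + (p0 * s0 - q0 * t)/(t*t + s0*s0) * s0 = p0 := by
      rw [div_mul_eq_mul_div, div_mul_eq_mul_div, ← add_div, div_eq_iff hts]
      ring
    have hB : (p0 * t + q0 * s0)/(t*t + s0*s0) * s0 + (p0 * s0 - q0 * t)/(t*t + s0*s0) * (-t) = q0 := by
      rw [div_mul_eq_mul_div, div_mul_eq_mul_div, ← add_div, div_eq_iff hts]
      ring
    rw [hA, hB]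
  have hrange : LinearMap.range φ = ⊤ := LinearMap.range_eq_top.mpr hsurj
  have hrk := LinearMap.finrank_range_add_finrank_ker φ
  rw [hrange, finrank_top] at hrk
  have h2rk : Module.finrank ℝ (ℝ × ℝ) = 2 := by simp
  have h4rk : Module.finrank ℝ (Fin 4 → ℝ) = 4 := by simp
  have hK2 : Module.finrank ℝ (LinearMap.ker φ) = 2 := by
    rw [h2rk, h4rk] at hrk
    omega
  let bas : Module.Basis (Fin 2) ℝ (LinearMap.ker φ) := Module.finBasisOfFinrankEq ℝ _ hK2
  set c : Fin 4 → ℝ := ((bas 0 : LinearMap.ker φ) : Fin 4 → ℝ) with hcdef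
  set d : Fin 4 → ℝ := ((bas 1 : LinearMap.ker φ) : Fin 4 → ℝ) with hddef
  have hkermem : ∀ x : Fin 4 → ℝ, x ∈ LinearMap.ker φ ↔
      (a ⬝ᵥ G *ᵥ x = 0 ∧ b ⬝ᵥ G *ᵥ x = 0) := by
    intro x
    rw [LinearMap.mem_ker, hφapp, Prod.ext_iff]
    rfl
  have hc : a ⬝ᵥ G *ᵥ c = 0 ∧ b ⬝ᵥ G *ᵥ c = 0 := (hkermem c).mp (bas 0).2
  have hd : a ⬝ᵥ G *ᵥ d = 0 ∧ b ⬝ᵥ G *ᵥ d = 0 := (hkermem d).mp (bas 1).2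
  have hcd : ∀ l m : ℝ, l • c + m • d = 0 → l = 0 ∧ m = 0 := by
    intro l m h
    have h0 : (∑ i : Fin 2, (![l, m] : Fin 2 → ℝ) i • bas i) = 0 := by
      apply Subtype.ext
      rw [Fin.sum_univ_two]
      simp only [Matrix.cons_val_zero, Matrix.cons_val_one, Matrix.head_cons,
        Submodule.coe_add, SetLike.val_smul, ZeroMemClass.coe_zero]
      exact h
    have hli := Fintype.linearIndependent_iff.mp bas.linearIndependent ![l, m] h0
    exact ⟨hli 0, hli 1⟩
  have hspan : ∀ x : Fin 4 → ℝ, a ⬝ᵥ G *ᵥ x = 0 → b ⬝ᵥ G *ᵥ x = 0 →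
      ∃ l m : ℝ, x = l • c + m • d := by
    intro x hax hbx
    have hxmem : x ∈ LinearMap.ker φ := (hkermem x).mpr ⟨hax, hbx⟩
    refine ⟨bas.repr ⟨x, hxmem⟩ 0, bas.repr ⟨x, hxmem⟩ 1, ?_⟩
    have hrepr := bas.sum_repr ⟨x, hxmem⟩
    have hval : ((∑ i : Fin 2, bas.repr ⟨x, hxmem⟩ i • bas i : LinearMap.ker φ) : Fin 4 → ℝ)
        = x := congrArg Subtype.val hrepr
    conv_lhs => rw [← hval]
    rw [Fin.sum_univ_two]
    simp only [Submodule.coe_add, SetLike.val_smul]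
    rfl
  have hMmem : ∀ x : Fin 4 → ℝ, a ⬝ᵥ G *ᵥ x = 0 → b ⬝ᵥ G *ᵥ x = 0 →
      (a ⬝ᵥ G *ᵥ (M *ᵥ x) = 0 ∧ b ⬝ᵥ G *ᵥ (M *ᵥ x) = 0) := by
    intro x hax hbx
    constructor
    · have h1 := (hsa a x).symm
      rw [hMa, sub_dotProduct, smul_dotProduct, smul_dotProduct,
        hax, hbx] at h1
      simpa using h1
    · have h1 := (hsa b x).symm
      rw [hMb, add_dotProduct, smul_dotProduct, smul_dotProduct,
        hax, hbx] at h1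
      simpa using h1
  clear_value c d
  clear hsurj hrange hrk hkermem hφapp
  clear hcdef hddef
  clear bas
  clear hK2 h2rk h4rk
  clear φ
  obtain ⟨pp, qq, hMcd⟩ := hspan (M *ᵥ c) (hMmem c hc.1 hc.2).1 (hMmem c hc.1 hc.2).2
  obtain ⟨rr, ss, hMdd⟩ := hspan (M *ᵥ d) (hMmem d hd.1 hd.2).1 (hMmem d hd.1 hd.2).2
  set g11 : ℝ := c ⬝ᵥ G *ᵥ c with hg11def
  set g12 : ℝ := c ⬝ᵥ G *ᵥ d with hg12def
  set g22 : ℝ := d ⬝ᵥ G *ᵥ d with hg22def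
  have hg21 : d ⬝ᵥ G *ᵥ c = g12 := by rw [hBsymm d c]
  -- a timelike vector in the plane of a, b
  have he : ∃ e : Fin 4 → ℝ, 0 < e ⬝ᵥ G *ᵥ e ∧ ∀ x : Fin 4 → ℝ,
      a ⬝ᵥ G *ᵥ x = 0 → b ⬝ᵥ G *ᵥ x = 0 → e ⬝ᵥ G *ᵥ x = 0 := by
    rcases lt_trichotomy t 0 with htneg | htz | htpos
    · exact ⟨b, by rw [hbb]; linarith, fun x _ hbx => hbx⟩
    · have hs0ne : s0 ≠ 0 := fun h => hW ⟨htz, h⟩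
      rcases hs0ne.lt_or_gt with hneg | hpos
      · refine ⟨(1:ℝ) • a + (-1:ℝ) • b, ?_, fun x hax hbx => ?_⟩
        · rw [hexp a b a b 1 (-1) 1 (-1), ← ht, ← hs0def, hba, hbb, htz]
          linarith
        · rw [add_dotProduct, smul_dotProduct, smul_dotProduct, hax, hbx]
          simp
      · refine ⟨(1:ℝ) • a + (1:ℝ) • b, ?_, fun x hax hbx => ?_⟩
        · rw [hexp a b a b 1 1 1 1, ← ht, ← hs0def, hba, hbb, htz]
          linarith
        · rw [add_dotProduct, smul_dotProduct, smul_dotProduct, hax, hbx]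
          simp
    · exact ⟨a, by rw [← ht]; linarith, fun x hax _ => hax⟩
  obtain ⟨e, hepos, heorth⟩ := he
  -- the kernel is negative definite
  have hKneg : ∀ x : Fin 4 → ℝ, a ⬝ᵥ G *ᵥ x = 0 → b ⬝ᵥ G *ᵥ x = 0 →
      x ⬝ᵥ G *ᵥ x ≤ 0 ∧ (x ⬝ᵥ G *ᵥ x = 0 → x = 0) := by
    intro x hax hbx
    have hex := heorth x hax hbx
    have hfe : (P⁻¹ *ᵥ e) 1 * (P⁻¹ *ᵥ e) 1 + (P⁻¹ *ᵥ e) 2 * (P⁻¹ *ᵥ e) 2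
        + (P⁻¹ *ᵥ e) 3 * (P⁻¹ *ᵥ e) 3 < (P⁻¹ *ᵥ e) 0 * (P⁻¹ *ᵥ e) 0 := by
      have h1 := htr e e
      rw [h1] at hepos
      linarith
    have hoo : (P⁻¹ *ᵥ e) 0 * (P⁻¹ *ᵥ x) 0 = (P⁻¹ *ᵥ e) 1 * (P⁻¹ *ᵥ x) 1
        + (P⁻¹ *ᵥ e) 2 * (P⁻¹ *ᵥ x) 2 + (P⁻¹ *ᵥ e) 3 * (P⁻¹ *ᵥ x) 3 := by
      have h1 := htr e x
      rw [hex] at h1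
      linarith
    obtain ⟨hle, heq⟩ := neg_on_perp hfe hoo
    constructor
    · rw [htr x x]
      linarith
    · intro hxx
      have h1 := htr x x
      rw [hxx] at h1
      have h2 : P⁻¹ *ᵥ x = 0 := heq (by linarith)
      have h3 := hrec x
      rw [h2, Matrix.mulVec_zero] at h3
      exact h3.symm
  have hc0 : c ≠ 0 := by
    intro h
    have := hcd 1 0 (by rw [h]; simp)
    exact one_ne_zero this.1
  have hd0 : d ≠ 0 := by
    intro h
    have := hcd 0 1 (by rw [h]; simp)
    exact one_ne_zero this.2
  have hg11neg : g11 < 0 := by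
    obtain ⟨hle, heq⟩ := hKneg c hc.1 hc.2
    rcases lt_or_eq_of_le hle with h | h
    · exact h
    · exact absurd (heq h) hc0
  have hg22neg : g22 < 0 := by
    obtain ⟨hle, heq⟩ := hKneg d hd.1 hd.2
    rcases lt_or_eq_of_le hle with h | h
    · exact h
    · exact absurd (heq h) hd0
  have hgdet : g12 * g12 < g11 * g22 := by
    have h1 : a ⬝ᵥ G *ᵥ (g11 • d + (-g12) • c) = 0 := by
      rw [hBcomb, hc.1, hd.1]
      ring
    have h2 : b ⬝ᵥ G *ᵥ (g11 • d + (-g12) • c) = 0 := by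
      rw [hBcomb, hc.2, hd.2]
      ring
    have h3 := hKneg _ h1 h2
    have hx0 : g11 • d + (-g12) • c ≠ 0 := by
      intro h
      have hcm := hcd (-g12) g11 (by rw [add_comm] at h; exact h)
      exact absurd hcm.2 (ne_of_lt hg11neg)
    have hquad : (g11 • d + (-g12) • c) ⬝ᵥ G *ᵥ (g11 • d + (-g12) • c)
        = g11 * (g11 * g22 - g12 * g12) := by
      rw [hexp d c d c g11 (-g12) g11 (-g12), hg21, ← hg22def, ← hg12def, ← hg11def]
      ring
    have h4 : (g11 • d + (-g12) • c) ⬝ᵥ G *ᵥ (g11 • d + (-g12) • c) < 0 :=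
      lt_of_le_of_ne h3.1 (fun h => hx0 (h3.2 h))
    rw [hquad] at h4
    by_contra hcon
    push_neg at hcon
    have h5 : 0 ≤ (-g11) * (g12 * g12 - g11 * g22) := mul_nonneg (by linarith) (by linarith)
    nlinarith [h4, h5]
  have hrel : pp * g12 + qq * g22 = rr * g11 + ss * g12 := by
    have h1 := hsa c d
    rw [hMcd, hMdd, add_dotProduct, smul_dotProduct, smul_dotProduct,
      hBcomb, ← hg22def, ← hg11def, ← hg12def, smul_eq_mul, smul_eq_mul] at h1
    linarith
  have hdisc : 0 ≤ (pp - ss)^2 + 4*(qq*rr) := by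
    rcases le_or_gt 0 (qq*rr) with hqr | hqr
    · nlinarith [sq_nonneg (pp - ss)]
    · have key1 : (pp - ss) * g12 = rr * g11 - qq * g22 := by linear_combination hrel
      have hg1122 : 0 < g11 * g22 := mul_pos_of_neg_of_neg hg11neg hg22neg
      have key2 : ((pp - ss) * g12)^2 ≤ (pp - ss)^2 * (g11 * g22) := by
        nlinarith [mul_nonneg (sq_nonneg (pp - ss)) (sub_pos.mpr hgdet).le]
      have key1sq : ((pp - ss) * g12)^2 = (rr * g11 - qq * g22)^2 := by rw [key1]
      have key3 : -4 * (qq * rr) * (g11 * g22) ≤ (rr * g11 - qq * g22)^2 := by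
        nlinarith [sq_nonneg (rr * g11 + qq * g22)]
      have key4 : 0 ≤ ((pp - ss)^2 + 4 * (qq*rr)) * (g11 * g22) := by
        nlinarith [key2, key3, key1sq]
      by_contra hcon
      push_neg at hcon
      have := mul_neg_of_neg_of_pos hcon hg1122
      linarith
  set Dq : ℝ := (pp - ss)^2 + 4*(qq*rr) with hDq
  set rt : ℝ := Real.sqrt Dq with hrtdef
  have hrtsq : rt^2 = (pp - ss)^2 + 4*(qq*rr) := by
    rw [hrtdef, Real.sq_sqrt hdisc, hDq]
  set r2 : ℝ := ((pp + ss) + rt)/2 with hr2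
  set s2 : ℝ := ((pp + ss) - rt)/2 with hs2
  have hV1 : pp + ss = r2 + s2 := by rw [hr2, hs2]; ring
  have hV2 : pp * ss - qq * rr = r2 * s2 := by
    rw [hr2, hs2]
    linear_combination ((1:ℝ)/4) * hrtsq
  -- the change of basis matrix
  set T : Matrix (Fin 4) (Fin 4) ℝ := Matrix.of (fun i j => ![a, b, c, d] j i) with hT
  have hMT : M * T = T * (blockN α β pp qq rr ss) := by
    rw [blockN_eq]
    ext i j
    rw [Matrix.mul_apply, Matrix.mul_apply]
    have hai := congrFun hMa i
    have hbi := congrFun hMb i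
    have hci := congrFun hMcd i
    have hdi := congrFun hMdd i
    simp only [Matrix.mulVec, dotProduct, Fin.sum_univ_four, Pi.add_apply, Pi.sub_apply,
      Pi.smul_apply, smul_eq_mul] at hai hbi hci hdi
    fin_cases j
    · simp [hT, Fin.sum_univ_four, Matrix.vecHead, Matrix.vecTail]
      linarith [hai]
    · simp [hT, Fin.sum_univ_four, Matrix.vecHead, Matrix.vecTail]
      linarith [hbi]
    · simp [hT, Fin.sum_univ_four, Matrix.vecHead, Matrix.vecTail]
      linarith [hci]
    · simp [hT, Fin.sum_univ_four, Matrix.vecHead, Matrix.vecTail]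
      linarith [hdi]
  have hTapp : ∀ x : Fin 4 → ℝ, T *ᵥ x = x 0 • a + x 1 • b + x 2 • c + x 3 • d := by
    intro x
    funext i
    simp [hT, Matrix.mulVec, dotProduct, Fin.sum_univ_four]
    ring
  have hTinj : Function.Injective (T.mulVec) := by
    have hker : ∀ w : Fin 4 → ℝ, T *ᵥ w = 0 → w = 0 := by
      intro w hw
      rw [hTapp] at hw
      have hBc4 : ∀ x : Fin 4 → ℝ, x ⬝ᵥ G *ᵥ (w 0 • a + w 1 • b + w 2 • c + w 3 • d)
          = w 0 * (x ⬝ᵥ G *ᵥ a) + w 1 * (x ⬝ᵥ G *ᵥ b)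
            + w 2 * (x ⬝ᵥ G *ᵥ c) + w 3 * (x ⬝ᵥ G *ᵥ d) := by
        intro x
        simp only [Matrix.mulVec_add, Matrix.mulVec_smul, dotProduct_add,
          dotProduct_smul, smul_eq_mul]
      have h1 : w 0 * t + w 1 * s0 = 0 := by
        have h := hBc4 a
        rw [hw, Matrix.mulVec_zero, dotProduct_zero, ← ht, ← hs0def, hc.1, hd.1] at h
        linarith
      have h2 : w 0 * s0 + w 1 * (-t) = 0 := by
        have h := hBc4 b
        rw [hw, Matrix.mulVec_zero, dotProduct_zero, hba, hbb, hc.2, hd.2] at h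
        linarith
      have hw0 : w 0 = 0 := by
        have h3 : w 0 * (t*t + s0*s0) = 0 := by linear_combination t * h1 + s0 * h2
        rcases mul_eq_zero.mp h3 with h | h
        · exact h
        · exact absurd h hts
      have hw1 : w 1 = 0 := by
        have h3 : w 1 * (t*t + s0*s0) = 0 := by linear_combination s0 * h1 - t * h2
        rcases mul_eq_zero.mp h3 with h | h
        · exact h
        · exact absurd h hts
      rw [hw0, hw1] at hw
      simp only [zero_smul, zero_add] at hw
      obtain ⟨hw2, hw3⟩ := hcd (w 2) (w 3) hw
      apply vec4_eq <;> simp [hw0, hw1, hw2, hw3]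
    intro x y hxy
    have := hker (x - y) (by rw [Matrix.mulVec_sub, hxy, sub_self])
    exact sub_eq_zero.mp this
  have hTdet : IsUnit T.det :=
    (Matrix.isUnit_iff_isUnit_det T).mp (Matrix.mulVec_injective_iff_isUnit.mp hTinj)
  have hcharM : M.charpoly = ((X - C α)^2 + C β^2) * ((X - C r2) * (X - C s2)) := by
    rw [charpoly_similar hTdet hMT, blockN_charpoly]
    congr 1
    rw [hV1, hV2, C_add, C_mul]
    ring
  constructor
  · rintro ⟨z', w, hz'im, hwim, hwz', hwstar, hz'root, hwroot⟩
    have hmem : ∀ v : ℂ, v.im ≠ 0 →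
        ((M.map (fun r : ℝ => (r : ℂ))).charpoly).IsRoot v → v = z ∨ v = star z := by
      intro v hvim hv
      unfold Polynomial.IsRoot at hv
      rw [hchar, hcharM, Polynomial.map_mul, Polynomial.eval_mul] at hv
      rcases mul_eq_zero.mp hv with h | h
      · have hx : Polynomial.eval v (Polynomial.map (algebraMap ℝ ℂ) ((X - C α)^2 + C β^2))
            = (v - (α:ℂ))^2 + (β:ℂ)^2 := by
          simp [Polynomial.map_add, Polynomial.map_pow, Polynomial.map_sub,
            Complex.coe_algebraMap]
        rw [hx] at h
        have hev : ((v - ((α:ℂ) + (β:ℂ) * Complex.I)) * (v - ((α:ℂ) - (β:ℂ) * Complex.I))) = 0 := by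
          calc (v - ((α:ℂ) + (β:ℂ) * Complex.I)) * (v - ((α:ℂ) - (β:ℂ) * Complex.I))
              = (v - (α:ℂ))^2 - ((β:ℂ))^2 * (Complex.I^2) := by ring
            _ = (v - (α:ℂ))^2 + ((β:ℂ))^2 := by rw [Complex.I_sq]; ring
            _ = 0 := h
        have hz_eq : ((α:ℂ) + (β:ℂ) * Complex.I) = z := by
          rw [halpha, hbeta]
          exact Complex.re_add_im z
        have hzstar_eq : ((α:ℂ) - (β:ℂ) * Complex.I) = star z := by
          rw [halpha, hbeta]
          apply Complex.ext <;> simp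
        rcases mul_eq_zero.mp hev with h1 | h1
        · left
          exact (sub_eq_zero.mp h1).trans hz_eq
        · right
          exact (sub_eq_zero.mp h1).trans hzstar_eq
      · exfalso
        have hx : Polynomial.eval v (Polynomial.map (algebraMap ℝ ℂ) ((X - C r2) * (X - C s2)))
            = (v - (r2:ℂ)) * (v - (s2:ℂ)) := by
          simp [Polynomial.map_mul, Polynomial.map_sub, Complex.coe_algebraMap]
        rw [hx] at h
        rcases mul_eq_zero.mp h with h1 | h1
        · apply hvim
          rw [sub_eq_zero.mp h1]
          simp
        · apply hvim
          rw [sub_eq_zero.mp h1]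
          simp
    rcases hmem z' hz'im hz'root with h1 | h1 <;> rcases hmem w hwim hwroot with h2 | h2
    · exact hwz' (h2.trans h1.symm)
    · apply hwstar
      rw [h1]
      exact h2
    · apply hwstar
      rw [h1, star_star]
      exact h2
    · exact hwz' (h2.trans h1.symm)
  · exact ⟨r2, s2, ⟨(X - C α)^2 + C β^2, by rw [hcharM]; ring⟩⟩
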